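/- Let a ∈ ℂ. A linear map φ on the Lie algebra 𝒲(a,−1) is a 1/2-derivation if and only if there exist two finitely supported families (α_t)_{t ∈ ℤ} and (β_t)_{t ∈ ℤ} of complex numbers such that φ(L_m) = Σ_{t ∈ ℤ} α_t L_{m+t} + Σ_{t ∈ ℤ} β_t I_{m+t} and φ(I_m) = Σ_{t ∈ ℤ} α_t I_{m+t} for all m ∈ ℤ. -/

import Mathlib

/-- The underlying space of the Lie algebra `𝒲(a,b)`, with basis
`L m = single (Sum.inl m) 1` and `I n = single (Sum.inr n) 1`. -/
abbrev Wab : Type := (ℤ ⊕ ℤ) →₀ ℂ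

/-- The bracket of `𝒲(a,b)` on basis elements:
`[L m, L n] = (m-n) L (m+n)`, `[L m, I n] = -(n+a+bm) I (m+n)`, `[I m, I n] = 0`. -/
noncomputable def wabBasic (a b : ℂ) : ℤ ⊕ ℤ → ℤ ⊕ ℤ → Wab
  | Sum.inl m, Sum.inl n => (((m : ℂ) - (n : ℂ))) • Finsupp.single (Sum.inl (m + n)) (1 : ℂ)
  | Sum.inl m, Sum.inr n => (-((n : ℂ) + a + b * (m : ℂ))) • Finsupp.single (Sum.inr (m + n)) (1 : ℂ)
  | Sum.inr m, Sum.inl n => (((m : ℂ) + a + b * (n : ℂ))) • Finsupp.single (Sum.inr (m + n)) (1 : ℂ)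
  | Sum.inr _, Sum.inr _ => 0

/-- The Lie bracket of `𝒲(a,b)`, extended bilinearly from basis elements. -/
noncomputable def wabBracket (a b : ℂ) (f g : Wab) : Wab :=
  f.sum fun p c => g.sum fun q d => (c * d) • wabBasic a b p q

/-- The basis element `L m` of `𝒲(a,b)`. -/
noncomputable def Lgen (m : ℤ) : Wab := Finsupp.single (Sum.inl m) 1

/-- The basis element `I m` of `𝒲(a,b)`. -/
noncomputable def Igen (m : ℤ) : Wab := Finsupp.single (Sum.inr m) 1

lemma sum_proj {ι : Type*} [DecidableEq ι] (v : ι →₀ ℂ) (F : ι → ℂ → Wab) (pt : ℤ ⊕ ℤ)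
    (t0 : ι) (coef : ℂ) (h : ∀ x c, F x c pt = if x = t0 then coef * c else 0) :
    (v.sum F) pt = coef * v t0 := by
  rw [Finsupp.sum_apply, Finsupp.sum_congr (g2 := fun x c => if x = t0 then coef * c else 0)
    (fun x _ => h x (v x)), Finsupp.sum_ite_eq']
  split_ifs with hs
  · rfl
  · rw [Finsupp.notMem_support_iff.mp hs, mul_zero]

lemma brk_single_left (a b : ℂ) (p : ℤ ⊕ ℤ) (g : Wab) :
    wabBracket a b (Finsupp.single p 1) g = g.sum fun q d => d • wabBasic a b p q := by
  rw [wabBracket, Finsupp.sum_single_index]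
  · simp only [one_mul]
  · simp only [zero_mul, zero_smul, Finsupp.sum, Finset.sum_const_zero]

lemma brk_single_right (a b : ℂ) (f : Wab) (q : ℤ ⊕ ℤ) :
    wabBracket a b f (Finsupp.single q 1) = f.sum fun p c => c • wabBasic a b p q := by
  rw [wabBracket]
  refine Finsupp.sum_congr fun p _ => ?_
  rw [Finsupp.sum_single_index] <;> simp

lemma brk_single_single (a b : ℂ) (p q : ℤ ⊕ ℤ) :
    wabBracket a b (Finsupp.single p 1) (Finsupp.single q 1) = wabBasic a b p q := by
  rw [brk_single_left, Finsupp.sum_single_index] <;> simp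

noncomputable def brHom (a b : ℂ) : Wab →ₗ[ℂ] Wab →ₗ[ℂ] Wab :=
  Finsupp.lsum ℂ fun p => LinearMap.toSpanSingleton ℂ (Wab →ₗ[ℂ] Wab)
    (Finsupp.lsum ℂ fun q => LinearMap.toSpanSingleton ℂ Wab (wabBasic a b p q))

lemma brHom_apply (a b : ℂ) (f g : Wab) : brHom a b f g = wabBracket a b f g := by
  rw [brHom, wabBracket, Finsupp.lsum_apply, Finsupp.sum, Finsupp.sum, LinearMap.sum_apply]
  refine Finset.sum_congr rfl fun p _ => ?_
  rw [LinearMap.toSpanSingleton_apply, LinearMap.smul_apply, Finsupp.lsum_apply,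
    Finsupp.smul_sum]
  refine Finsupp.sum_congr fun q _ => ?_
  rw [LinearMap.toSpanSingleton_apply, smul_smul]

lemma brkR_L_inl (a b : ℂ) (f : Wab) (n q : ℤ) :
    wabBracket a b f (Lgen n) (Sum.inl q) = (((q - n : ℤ) : ℂ) - (n : ℂ)) * f (Sum.inl (q - n)) := by
  rw [Lgen, brk_single_right]
  refine sum_proj _ _ _ _ _ fun x c => ?_
  rcases x with m' | m'
  · simp only [wabBasic, Finsupp.smul_apply, Finsupp.single_apply, smul_eq_mul, Sum.inl.injEq]
    split_ifs with h1 h2 h2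
    · push_cast; obtain rfl : m' = q - n := by omega
      push_cast; ring
    · omega
    · omega
    · ring
  · simp only [wabBasic, Finsupp.smul_apply, Finsupp.single_apply, smul_eq_mul]
    have : (Sum.inr (m' + n) : ℤ ⊕ ℤ) ≠ Sum.inl q := by simp
    rw [if_neg this, if_neg (by simp)]
    ring

lemma brkR_L_inr (a b : ℂ) (f : Wab) (n q : ℤ) :
    wabBracket a b f (Lgen n) (Sum.inr q) =
      (((q - n : ℤ) : ℂ) + a + b * (n : ℂ)) * f (Sum.inr (q - n)) := by
  rw [Lgen, brk_single_right]
  refine sum_proj _ _ _ _ _ fun x c => ?_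
  rcases x with m' | m'
  · simp only [wabBasic, Finsupp.smul_apply, Finsupp.single_apply, smul_eq_mul]
    rw [if_neg (by simp), if_neg (by simp)]; ring
  · simp only [wabBasic, Finsupp.smul_apply, Finsupp.single_apply, smul_eq_mul, Sum.inr.injEq]
    split_ifs with h1 h2 h2
    · obtain rfl : m' = q - n := by omega
      push_cast; ring
    · omega
    · omega
    · ring

lemma brkR_I_inl (a b : ℂ) (f : Wab) (n q : ℤ) :
    wabBracket a b f (Igen n) (Sum.inl q) = 0 := by
  rw [Igen, brk_single_right]
  rw [show (0 : ℂ) = 0 * f (Sum.inl 0) by ring]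
  refine sum_proj _ _ _ _ _ fun x c => ?_
  rcases x with m' | m'
  · simp only [wabBasic, Finsupp.smul_apply, Finsupp.single_apply, smul_eq_mul]
    rw [if_neg (by simp)]
    split_ifs <;> ring
  · simp only [wabBasic, smul_zero, Finsupp.coe_zero, Pi.zero_apply]
    split_ifs <;> ring

lemma brkR_I_inr (a b : ℂ) (f : Wab) (n q : ℤ) :
    wabBracket a b f (Igen n) (Sum.inr q) =
      (-((n : ℂ) + a + b * ((q - n : ℤ) : ℂ))) * f (Sum.inl (q - n)) := by
  rw [Igen, brk_single_right]
  refine sum_proj _ _ _ _ _ fun x c => ?_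
  rcases x with m' | m'
  · simp only [wabBasic, Finsupp.smul_apply, Finsupp.single_apply, smul_eq_mul, Sum.inr.injEq,
      Sum.inl.injEq]
    split_ifs with h1 h2 h2
    · obtain rfl : m' = q - n := by omega
      push_cast; ring
    · omega
    · omega
    · ring
  · simp only [wabBasic, smul_zero, Finsupp.coe_zero, Pi.zero_apply]
    rw [if_neg (by simp)]

lemma brkL_L_inl (a b : ℂ) (m : ℤ) (g : Wab) (q : ℤ) :
    wabBracket a b (Lgen m) g (Sum.inl q) = ((m : ℂ) - ((q - m : ℤ) : ℂ)) * g (Sum.inl (q - m)) := by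
  rw [Lgen, brk_single_left]
  refine sum_proj _ _ _ _ _ fun x c => ?_
  rcases x with n' | n'
  · simp only [wabBasic, Finsupp.smul_apply, Finsupp.single_apply, smul_eq_mul, Sum.inl.injEq]
    split_ifs with h1 h2 h2
    · obtain rfl : n' = q - m := by omega
      push_cast; ring
    · omega
    · omega
    · ring
  · simp only [wabBasic, Finsupp.smul_apply, Finsupp.single_apply, smul_eq_mul]
    rw [if_neg (by simp), if_neg (by simp)]; ring

lemma brkL_L_inr (a b : ℂ) (m : ℤ) (g : Wab) (q : ℤ) :
    wabBracket a b (Lgen m) g (Sum.inr q) =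
      (-(((q - m : ℤ) : ℂ) + a + b * (m : ℂ))) * g (Sum.inr (q - m)) := by
  rw [Lgen, brk_single_left]
  refine sum_proj _ _ _ _ _ fun x c => ?_
  rcases x with n' | n'
  · simp only [wabBasic, Finsupp.smul_apply, Finsupp.single_apply, smul_eq_mul]
    rw [if_neg (by simp), if_neg (by simp)]; ring
  · simp only [wabBasic, Finsupp.smul_apply, Finsupp.single_apply, smul_eq_mul, Sum.inr.injEq]
    split_ifs with h1 h2 h2
    · obtain rfl : n' = q - m := by omega
      push_cast; ring
    · omega
    · omega
    · ring

lemma brkL_I_inl (a b : ℂ) (m : ℤ) (g : Wab) (q : ℤ) :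
    wabBracket a b (Igen m) g (Sum.inl q) = 0 := by
  rw [Igen, brk_single_left]
  rw [show (0 : ℂ) = 0 * g (Sum.inl 0) by ring]
  refine sum_proj _ _ _ _ _ fun x c => ?_
  rcases x with n' | n'
  · simp only [wabBasic, Finsupp.smul_apply, Finsupp.single_apply, smul_eq_mul]
    rw [if_neg (by simp)]
    split_ifs <;> ring
  · simp only [wabBasic, smul_zero, Finsupp.coe_zero, Pi.zero_apply]
    split_ifs <;> ring

lemma brkL_I_inr (a b : ℂ) (m : ℤ) (g : Wab) (q : ℤ) :
    wabBracket a b (Igen m) g (Sum.inr q) =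
      ((m : ℂ) + a + b * ((q - m : ℤ) : ℂ)) * g (Sum.inl (q - m)) := by
  rw [Igen, brk_single_left]
  refine sum_proj _ _ _ _ _ fun x c => ?_
  rcases x with n' | n'
  · simp only [wabBasic, Finsupp.smul_apply, Finsupp.single_apply, smul_eq_mul, Sum.inr.injEq,
      Sum.inl.injEq]
    split_ifs with h1 h2 h2
    · obtain rfl : n' = q - m := by omega
      push_cast; ring
    · omega
    · omega
    · ring
  · simp only [wabBasic, smul_zero, Finsupp.coe_zero, Pi.zero_apply]
    rw [if_neg (by simp)]

lemma sumLgen_inl (v : ℤ →₀ ℂ) (m q : ℤ) :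
    (v.sum fun t c => c • Lgen (m + t)) (Sum.inl q) = v (q - m) := by
  rw [show v (q - m) = 1 * v (q - m) by ring]
  refine sum_proj _ _ _ _ _ fun x c => ?_
  simp only [Lgen, Finsupp.smul_apply, Finsupp.single_apply, smul_eq_mul, Sum.inl.injEq]
  split_ifs with h1 h2 h2
  · ring
  · omega
  · omega
  · ring

lemma sumLgen_inr (v : ℤ →₀ ℂ) (m q : ℤ) :
    (v.sum fun t c => c • Lgen (m + t)) (Sum.inr q) = 0 := by
  rw [show (0 : ℂ) = 0 * v 0 by ring]
  refine sum_proj _ _ _ _ _ fun x c => ?_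
  simp only [Lgen, Finsupp.smul_apply, Finsupp.single_apply, smul_eq_mul]
  rw [if_neg (by simp)]
  split_ifs <;> ring

lemma sumIgen_inr (v : ℤ →₀ ℂ) (m q : ℤ) :
    (v.sum fun t c => c • Igen (m + t)) (Sum.inr q) = v (q - m) := by
  rw [show v (q - m) = 1 * v (q - m) by ring]
  refine sum_proj _ _ _ _ _ fun x c => ?_
  simp only [Igen, Finsupp.smul_apply, Finsupp.single_apply, smul_eq_mul, Sum.inr.injEq]
  split_ifs with h1 h2 h2
  · ring
  · omega
  · omega
  · ring

lemma sumIgen_inl (v : ℤ →₀ ℂ) (m q : ℤ) :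
    (v.sum fun t c => c • Igen (m + t)) (Sum.inl q) = 0 := by
  rw [show (0 : ℂ) = 0 * v 0 by ring]
  refine sum_proj _ _ _ _ _ fun x c => ?_
  simp only [Igen, Finsupp.smul_apply, Finsupp.single_apply, smul_eq_mul]
  rw [if_neg (by simp)]
  split_ifs <;> ring

/-- A linear map `φ` on `𝒲(a,-1)` is a 1/2-derivation iff there
are finitely supported families `(α_t)`, `(β_t)` with
`φ (L m) = Σ_t α_t L (m+t) + Σ_t β_t I (m+t)` and `φ (I m) = Σ_t α_t I (m+t)`. -/
theorem wab_neg_one_half_derivation_iff (a : ℂ) (φ : Wab →ₗ[ℂ] Wab) :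
    (∀ x y : Wab, φ (wabBracket a (-1) x y) =
        (1 / 2 : ℂ) • (wabBracket a (-1) (φ x) y + wabBracket a (-1) x (φ y))) ↔
    ∃ α β : ℤ →₀ ℂ,
      (∀ m : ℤ, φ (Lgen m) =
        (α.sum fun t c => c • Lgen (m + t)) + (β.sum fun t c => c • Igen (m + t))) ∧
      (∀ m : ℤ, φ (Igen m) = α.sum fun t c => c • Igen (m + t)) := by
  have cancel : ∀ (k : ℤ) (z w : ℂ), k ≠ 0 → (k : ℂ) * z = (k : ℂ) * w → z = w :=
    fun k z w hk h' => mul_left_cancel₀ (Int.cast_ne_zero.mpr hk) h'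
  constructor
  · intro h
    have eLL : ∀ m n : ℤ, wabBracket a (-1) (Lgen m) (Lgen n)
        = ((m : ℂ) - (n : ℂ)) • Lgen (m + n) := by
      intro m n; rw [Lgen, Lgen, brk_single_single]; rfl
    have eLI : ∀ m n : ℤ, wabBracket a (-1) (Lgen m) (Igen n)
        = (-((n : ℂ) + a + (-1) * (m : ℂ))) • Igen (m + n) := by
      intro m n; rw [Lgen, Igen, brk_single_single]; rfl
    have R1 : ∀ m n r : ℤ, ((m : ℂ) - (n : ℂ)) * φ (Lgen (m + n)) (Sum.inl r) =
        (1 / 2 : ℂ) * ((((r - n : ℤ) : ℂ) - (n : ℂ)) * φ (Lgen m) (Sum.inl (r - n)) +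
          ((m : ℂ) - ((r - m : ℤ) : ℂ)) * φ (Lgen n) (Sum.inl (r - m))) := by
      intro m n r
      have H := h (Lgen m) (Lgen n)
      rw [eLL m n, map_smul] at H
      have H2 := DFunLike.congr_fun H (Sum.inl r)
      rw [Finsupp.smul_apply, Finsupp.smul_apply, smul_eq_mul, smul_eq_mul,
        Finsupp.add_apply, brkR_L_inl, brkL_L_inl] at H2
      exact H2
    have R2 : ∀ m n r : ℤ, ((m : ℂ) - (n : ℂ)) * φ (Lgen (m + n)) (Sum.inr r) =
        (1 / 2 : ℂ) * ((((r - n : ℤ) : ℂ) + a + (-1) * (n : ℂ)) * φ (Lgen m) (Sum.inr (r - n)) +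
          (-(((r - m : ℤ) : ℂ) + a + (-1) * (m : ℂ))) * φ (Lgen n) (Sum.inr (r - m))) := by
      intro m n r
      have H := h (Lgen m) (Lgen n)
      rw [eLL m n, map_smul] at H
      have H2 := DFunLike.congr_fun H (Sum.inr r)
      rw [Finsupp.smul_apply, Finsupp.smul_apply, smul_eq_mul, smul_eq_mul,
        Finsupp.add_apply, brkR_L_inr, brkL_L_inr] at H2
      exact H2
    have R3 : ∀ m n r : ℤ, (-((n : ℂ) + a + (-1) * (m : ℂ))) * φ (Igen (m + n)) (Sum.inl r) =
        (1 / 2 : ℂ) * (((m : ℂ) - ((r - m : ℤ) : ℂ)) * φ (Igen n) (Sum.inl (r - m))) := by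
      intro m n r
      have H := h (Lgen m) (Igen n)
      rw [eLI m n, map_smul] at H
      have H2 := DFunLike.congr_fun H (Sum.inl r)
      rw [Finsupp.smul_apply, Finsupp.smul_apply, smul_eq_mul, smul_eq_mul,
        Finsupp.add_apply, brkR_I_inl, brkL_L_inl, zero_add] at H2
      exact H2
    have R4 : ∀ m n r : ℤ, (-((n : ℂ) + a + (-1) * (m : ℂ))) * φ (Igen (m + n)) (Sum.inr r) =
        (1 / 2 : ℂ) * ((-((n : ℂ) + a + (-1) * ((r - n : ℤ) : ℂ))) * φ (Lgen m) (Sum.inl (r - n)) +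
          (-(((r - m : ℤ) : ℂ) + a + (-1) * (m : ℂ))) * φ (Igen n) (Sum.inr (r - m))) := by
      intro m n r
      have H := h (Lgen m) (Igen n)
      rw [eLI m n, map_smul] at H
      have H2 := DFunLike.congr_fun H (Sum.inr r)
      rw [Finsupp.smul_apply, Finsupp.smul_apply, smul_eq_mul, smul_eq_mul,
        Finsupp.add_apply, brkR_I_inr, brkL_L_inr] at H2
      exact H2
    have hA0 : ∀ m r : ℤ, r ≠ 2 * m →
        φ (Lgen m) (Sum.inl r) = φ (Lgen 0) (Sum.inl (r - m)) := by
      intro m r hr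
      have H := R1 m 0 r
      rw [add_zero, show r - 0 = r from by ring] at H
      refine cancel (2 * m - r) _ _ (by omega) ?_
      push_cast at H ⊢
      linear_combination 2 * H
    have hA : ∀ m r : ℤ, φ (Lgen m) (Sum.inl r) = φ (Lgen 0) (Sum.inl (r - m)) := by
      intro m r
      by_cases hr : r = 2 * m
      · subst hr
        rcases eq_or_ne m (-1) with rfl | hm
        · have H := R1 1 (-2) (-2)
          rw [show (1 : ℤ) + -2 = -1 from by ring, show (-2 : ℤ) - -2 = 0 from by ring,
            show (-2 : ℤ) - 1 = -3 from by ring, hA0 1 0 (by omega), hA0 (-2) (-3) (by omega),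
            show (0 : ℤ) - 1 = -1 from by ring, show (-3 : ℤ) - -2 = -1 from by ring] at H
          rw [show (2 : ℤ) * -1 - -1 = -1 from by ring]
          refine cancel 3 _ _ (by omega) ?_
          push_cast at H ⊢
          linear_combination H
        · have H := R1 (2 * m + 1) (-m - 1) (2 * m)
          rw [show 2 * m + 1 + (-m - 1) = m from by ring,
            hA0 (2 * m + 1) (2 * m - (-m - 1)) (by omega),
            hA0 (-m - 1) (2 * m - (2 * m + 1)) (by omega),
            show 2 * m - (-m - 1) - (2 * m + 1) = m from by ring,
            show 2 * m - (2 * m + 1) - (-m - 1) = m from by ring] at H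
          rw [show 2 * m - m = m from by ring]
          refine cancel (3 * m + 2) _ _ (by omega) ?_
          push_cast at H ⊢
          linear_combination H
      · exact hA0 m r hr
    have hB0 : ∀ m r : ℤ, ((2 * m - r : ℤ) : ℂ) ≠ a →
        φ (Lgen m) (Sum.inr r) = φ (Lgen 0) (Sum.inr (r - m)) := by
      intro m r hr
      have H := R2 m 0 r
      rw [add_zero, show r - 0 = r from by ring] at H
      have key : (((2 * m - r : ℤ) : ℂ) - a) * (φ (Lgen m) (Sum.inr r)
          - φ (Lgen 0) (Sum.inr (r - m))) = 0 := by
        push_cast at H ⊢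
        linear_combination 2 * H
      rcases mul_eq_zero.mp key with h0 | h0
      · exact absurd h0 (sub_ne_zero.mpr hr)
      · exact sub_eq_zero.mp h0
    have hB : ∀ m r : ℤ, φ (Lgen m) (Sum.inr r) = φ (Lgen 0) (Sum.inr (r - m)) := by
      intro m r
      by_cases hr : ((2 * m - r : ℤ) : ℂ) = a
      · rcases eq_or_ne m (-1) with rfl | hm
        · have H := R2 1 (-2) r
          rw [show (1 : ℤ) + -2 = -1 from by ring,
            hB0 1 (r - -2) (by rw [← hr]; intro hx; have := Int.cast_injective hx; omega),
            hB0 (-2) (r - 1) (by rw [← hr]; intro hx; have := Int.cast_injective hx; omega),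
            show r - -2 - 1 = r - -1 from by ring,
            show r - 1 - -2 = r - -1 from by ring] at H
          refine cancel 3 _ _ (by omega) ?_
          push_cast at H ⊢
          linear_combination H
        · have H := R2 (2 * m + 1) (-m - 1) r
          rw [show 2 * m + 1 + (-m - 1) = m from by ring,
            hB0 (2 * m + 1) (r - (-m - 1))
              (by rw [← hr]; intro hx; have := Int.cast_injective hx; omega),
            hB0 (-m - 1) (r - (2 * m + 1))
              (by rw [← hr]; intro hx; have := Int.cast_injective hx; omega),
            show r - (-m - 1) - (2 * m + 1) = r - m from by ring,
            show r - (2 * m + 1) - (-m - 1) = r - m from by ring] at H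
          refine cancel (3 * m + 2) _ _ (by omega) ?_
          push_cast at H ⊢
          linear_combination H
      · exact hB0 m r hr
    have hC0 : ∀ n r : ℤ, ((r - 2 * n : ℤ) : ℂ) ≠ 2 * a → φ (Igen n) (Sum.inl r) = 0 := by
      intro n r hr
      have H := R3 0 n r
      rw [zero_add, show r - 0 = r from by ring] at H
      have key : (((r - 2 * n : ℤ) : ℂ) - 2 * a) * φ (Igen n) (Sum.inl r) = 0 := by
        push_cast at H ⊢
        linear_combination 2 * H
      rcases mul_eq_zero.mp key with h0 | h0
      · exact absurd h0 (sub_ne_zero.mpr hr)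
      · exact h0
    have hC : ∀ n r : ℤ, φ (Igen n) (Sum.inl r) = 0 := by
      intro n r
      by_cases hr : ((r - 2 * n : ℤ) : ℂ) = 2 * a
      · by_cases h4 : r = 4
        · have H := R3 2 (n - 2) r
          rw [show 2 + (n - 2) = n from by ring,
            hC0 (n - 2) (r - 2) (by rw [← hr]; intro hx; have := Int.cast_injective hx; omega),
            mul_zero, mul_zero] at H
          have key : ((r - 8 : ℤ) : ℂ) * φ (Igen n) (Sum.inl r) = 0 := by
            push_cast at H hr ⊢
            linear_combination (-2 : ℂ) * H + φ (Igen n) (Sum.inl r) * hr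
          rcases mul_eq_zero.mp key with h0 | h0
          · exact absurd h0 (Int.cast_ne_zero.mpr (by omega))
          · exact h0
        · have H := R3 1 (n - 1) r
          rw [show 1 + (n - 1) = n from by ring,
            hC0 (n - 1) (r - 1) (by rw [← hr]; intro hx; have := Int.cast_injective hx; omega),
            mul_zero, mul_zero] at H
          have key : ((r - 4 : ℤ) : ℂ) * φ (Igen n) (Sum.inl r) = 0 := by
            push_cast at H hr ⊢
            linear_combination (-2 : ℂ) * H + φ (Igen n) (Sum.inl r) * hr
          rcases mul_eq_zero.mp key with h0 | h0
          · exact absurd h0 (Int.cast_ne_zero.mpr (by omega))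
          · exact h0
      · exact hC0 n r hr
    have hD0 : ∀ n r : ℤ, ((r - 2 * n : ℤ) : ℂ) ≠ a →
        φ (Igen n) (Sum.inr r) = φ (Lgen 0) (Sum.inl (r - n)) := by
      intro n r hr
      have H := R4 0 n r
      rw [zero_add, show r - 0 = r from by ring, hA 0 (r - n), show r - n - 0 = r - n from by ring]
        at H
      have key : (((r - 2 * n : ℤ) : ℂ) - a) * (φ (Igen n) (Sum.inr r)
          - φ (Lgen 0) (Sum.inl (r - n))) = 0 := by
        push_cast at H ⊢
        linear_combination 2 * H
      rcases mul_eq_zero.mp key with h0 | h0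
      · exact absurd h0 (sub_ne_zero.mpr hr)
      · exact sub_eq_zero.mp h0
    have hD : ∀ n r : ℤ, φ (Igen n) (Sum.inr r) = φ (Lgen 0) (Sum.inl (r - n)) := by
      intro n r
      by_cases hr : ((r - 2 * n : ℤ) : ℂ) = a
      · by_cases hs : r - n = 1 ∨ r - n = 2
        · have H := R4 3 (n - 3) r
          rw [show 3 + (n - 3) = n from by ring, hA 3 (r - (n - 3)),
            hD0 (n - 3) (r - 3) (by rw [← hr]; intro hx; have := Int.cast_injective hx; omega),
            show r - (n - 3) - 3 = r - n from by ring,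
            show r - 3 - (n - 3) = r - n from by ring] at H
          refine cancel (r - n - 6) _ _ (by omega) ?_
          push_cast at H hr ⊢
          linear_combination (-1 : ℂ) * H +
            (φ (Igen n) (Sum.inr r) - φ (Lgen 0) (Sum.inl (r - n))) * hr
        · have H := R4 1 (n - 1) r
          rw [show 1 + (n - 1) = n from by ring, hA 1 (r - (n - 1)),
            hD0 (n - 1) (r - 1) (by rw [← hr]; intro hx; have := Int.cast_injective hx; omega),
            show r - (n - 1) - 1 = r - n from by ring,
            show r - 1 - (n - 1) = r - n from by ring] at H
          refine cancel (r - n - 2) _ _ (by omega) ?_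
          push_cast at H hr ⊢
          linear_combination (-1 : ℂ) * H +
            (φ (Igen n) (Sum.inr r) - φ (Lgen 0) (Sum.inl (r - n))) * hr
      · exact hD0 n r hr
    refine ⟨Finsupp.comapDomain Sum.inl (φ (Lgen 0)) Sum.inl_injective.injOn,
      Finsupp.comapDomain Sum.inr (φ (Lgen 0)) Sum.inr_injective.injOn, fun m => ?_, fun m => ?_⟩
    · ext pt
      rcases pt with r | r
      · rw [Finsupp.add_apply, sumLgen_inl, sumIgen_inl, add_zero,
          Finsupp.comapDomain_apply, hA m r]
      · rw [Finsupp.add_apply, sumLgen_inr, sumIgen_inr, zero_add,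
          Finsupp.comapDomain_apply, hB m r]
    · ext pt
      rcases pt with r | r
      · rw [sumIgen_inl, hC]
      · rw [sumIgen_inr, Finsupp.comapDomain_apply, hD]

  · rintro ⟨α, β, hL, hI⟩
    have hA : ∀ m r : ℤ, φ (Lgen m) (Sum.inl r) = α (r - m) := fun m r => by
      rw [hL m, Finsupp.add_apply, sumLgen_inl, sumIgen_inl, add_zero]
    have hB : ∀ m r : ℤ, φ (Lgen m) (Sum.inr r) = β (r - m) := fun m r => by
      rw [hL m, Finsupp.add_apply, sumLgen_inr, sumIgen_inr, zero_add]
    have hC : ∀ m r : ℤ, φ (Igen m) (Sum.inl r) = 0 := fun m r => by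
      rw [hI m, sumIgen_inl]
    have hD : ∀ m r : ℤ, φ (Igen m) (Sum.inr r) = α (r - m) := fun m r => by
      rw [hI m, sumIgen_inr]
    have key : ∀ p q : ℤ ⊕ ℤ,
        φ (wabBracket a (-1) (Finsupp.single p 1) (Finsupp.single q 1)) =
        (1 / 2 : ℂ) • (wabBracket a (-1) (φ (Finsupp.single p 1)) (Finsupp.single q 1) +
          wabBracket a (-1) (Finsupp.single p 1) (φ (Finsupp.single q 1))) := by
      rintro (m | m) (n | n)
      · show φ (wabBracket a (-1) (Lgen m) (Lgen n)) = (1 / 2 : ℂ) •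
          (wabBracket a (-1) (φ (Lgen m)) (Lgen n) + wabBracket a (-1) (Lgen m) (φ (Lgen n)))
        rw [show wabBracket a (-1) (Lgen m) (Lgen n) = ((m : ℂ) - (n : ℂ)) • Lgen (m + n) from by
          rw [Lgen, Lgen, brk_single_single]; rfl, map_smul]
        ext pt
        rcases pt with r | r
        · rw [Finsupp.smul_apply, Finsupp.smul_apply, smul_eq_mul, smul_eq_mul,
            Finsupp.add_apply, brkR_L_inl, brkL_L_inl, hA, hA, hA,
            show r - n - m = r - (m + n) from by ring, show r - m - n = r - (m + n) from by ring]
          push_cast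
          ring
        · rw [Finsupp.smul_apply, Finsupp.smul_apply, smul_eq_mul, smul_eq_mul,
            Finsupp.add_apply, brkR_L_inr, brkL_L_inr, hB, hB, hB,
            show r - n - m = r - (m + n) from by ring, show r - m - n = r - (m + n) from by ring]
          push_cast
          ring
      · show φ (wabBracket a (-1) (Lgen m) (Igen n)) = (1 / 2 : ℂ) •
          (wabBracket a (-1) (φ (Lgen m)) (Igen n) + wabBracket a (-1) (Lgen m) (φ (Igen n)))
        rw [show wabBracket a (-1) (Lgen m) (Igen n)
            = (-((n : ℂ) + a + (-1) * (m : ℂ))) • Igen (m + n) from by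
          rw [Lgen, Igen, brk_single_single]; rfl, map_smul]
        ext pt
        rcases pt with r | r
        · rw [Finsupp.smul_apply, Finsupp.smul_apply, smul_eq_mul, smul_eq_mul,
            Finsupp.add_apply, brkR_I_inl, brkL_L_inl, hC, hC]
          ring
        · rw [Finsupp.smul_apply, Finsupp.smul_apply, smul_eq_mul, smul_eq_mul,
            Finsupp.add_apply, brkR_I_inr, brkL_L_inr, hD, hA, hD,
            show r - n - m = r - (m + n) from by ring, show r - m - n = r - (m + n) from by ring]
          push_cast
          ring
      · show φ (wabBracket a (-1) (Igen m) (Lgen n)) = (1 / 2 : ℂ) •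
          (wabBracket a (-1) (φ (Igen m)) (Lgen n) + wabBracket a (-1) (Igen m) (φ (Lgen n)))
        rw [show wabBracket a (-1) (Igen m) (Lgen n)
            = ((m : ℂ) + a + (-1) * (n : ℂ)) • Igen (m + n) from by
          rw [Lgen, Igen, brk_single_single]; rfl, map_smul]
        ext pt
        rcases pt with r | r
        · rw [Finsupp.smul_apply, Finsupp.smul_apply, smul_eq_mul, smul_eq_mul,
            Finsupp.add_apply, brkR_L_inl, brkL_I_inl, hC, hC]
          ring
        · rw [Finsupp.smul_apply, Finsupp.smul_apply, smul_eq_mul, smul_eq_mul,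
            Finsupp.add_apply, brkR_L_inr, brkL_I_inr, hD, hD, hA,
            show r - n - m = r - (m + n) from by ring, show r - m - n = r - (m + n) from by ring]
          push_cast
          ring
      · show φ (wabBracket a (-1) (Igen m) (Igen n)) = (1 / 2 : ℂ) •
          (wabBracket a (-1) (φ (Igen m)) (Igen n) + wabBracket a (-1) (Igen m) (φ (Igen n)))
        rw [show wabBracket a (-1) (Igen m) (Igen n) = (0 : Wab) from by
          rw [Igen, Igen, brk_single_single]; rfl, map_zero]
        ext pt
        rcases pt with r | r
        · rw [Finsupp.smul_apply, smul_eq_mul, Finsupp.add_apply, brkR_I_inl, brkL_I_inl,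
            Finsupp.coe_zero, Pi.zero_apply]
          ring
        · rw [Finsupp.smul_apply, smul_eq_mul, Finsupp.add_apply, brkR_I_inr, brkL_I_inr,
            hC, hC, Finsupp.coe_zero, Pi.zero_apply]
          ring
    suffices hDD : (brHom a (-1)).compr₂ φ =
        (1 / 2 : ℂ) • ((brHom a (-1)).comp φ + (brHom a (-1)).compl₂ φ) by
      intro x y
      have h2 := LinearMap.congr_fun (LinearMap.congr_fun hDD x) y
      simpa only [LinearMap.compr₂_apply, LinearMap.comp_apply, LinearMap.compl₂_apply,
        LinearMap.smul_apply, LinearMap.add_apply, brHom_apply] using h2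
    refine Finsupp.lhom_ext fun p c => ?_
    refine Finsupp.lhom_ext fun q d => ?_
    have base : φ (brHom a (-1) (Finsupp.single p 1) (Finsupp.single q 1)) =
        (1 / 2 : ℂ) • (brHom a (-1) (φ (Finsupp.single p 1)) (Finsupp.single q 1) +
          brHom a (-1) (Finsupp.single p 1) (φ (Finsupp.single q 1))) := by
      rw [brHom_apply, brHom_apply, brHom_apply]
      exact key p q
    rw [← Finsupp.smul_single_one p c, ← Finsupp.smul_single_one q d]
    simp only [LinearMap.compr₂_apply, LinearMap.comp_apply, LinearMap.compl₂_apply,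
      LinearMap.smul_apply, LinearMap.add_apply, map_smul, LinearMap.smul_apply]
    rw [base]
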